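/- Fix n > 1. For every t ∈ [0, 1/√(n² − 1)]: (√(1 + (1 − n²)t²) + n t²)/(1 + t²) ≥ 1/n, with equality if and only if t = 1/√(n² − 1). Consequently, for the lens refractor I mapping y = R₁(‖p‖)x + R₂(‖p‖)p one has the solvability condition ⟨x,y⟩ ≥ 1/n, i.e. mass cannot be transported a geodesic distance greater than arccos(1/n). -/

import Mathlib

open Real Set
open scoped RealInnerProductSpace

noncomputable section

/-- For `n > 1` and `t ∈ [0, 1/√(n²-1)]`:
`(√(1+(1-n²)t²) + nt²)/(1+t²) ≥ 1/n`, with equality iff `t = 1/√(n²-1)`.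
Consequently, for the lens refractor I mapping `y = R₁(‖p‖)x + R₂(‖p‖)p` one has the
solvability condition `⟪x,y⟫ ≥ 1/n`. -/
theorem stmt_6
    (n : ℝ) (hn : 1 < n) :
    (∀ t ∈ Set.Icc (0 : ℝ) (1 / Real.sqrt (n ^ 2 - 1)),
        1 / n ≤ (Real.sqrt (1 + (1 - n ^ 2) * t ^ 2) + n * t ^ 2) / (1 + t ^ 2)
        ∧ ((Real.sqrt (1 + (1 - n ^ 2) * t ^ 2) + n * t ^ 2) / (1 + t ^ 2) = 1 / n
            ↔ t = 1 / Real.sqrt (n ^ 2 - 1)))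
    ∧ ∀ x p y : EuclideanSpace ℝ (Fin 3), ‖x‖ = 1 → ⟪p, x⟫ = 0 →
        ‖p‖ ≤ 1 / Real.sqrt (n ^ 2 - 1) →
        y = ((Real.sqrt (1 + (1 - n ^ 2) * ‖p‖ ^ 2) + n * ‖p‖ ^ 2) / (1 + ‖p‖ ^ 2)) • x
            + ((Real.sqrt (1 + (1 - n ^ 2) * ‖p‖ ^ 2) - n) / (1 + ‖p‖ ^ 2)) • p →
        1 / n ≤ ⟪x, y⟫ := by
  have hn0 : (0:ℝ) < n := lt_trans one_pos hn
  have hn2 : (0:ℝ) < n ^ 2 - 1 := by nlinarith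
  have key : ∀ t ∈ Set.Icc (0 : ℝ) (1 / Real.sqrt (n ^ 2 - 1)),
      1 / n ≤ (Real.sqrt (1 + (1 - n ^ 2) * t ^ 2) + n * t ^ 2) / (1 + t ^ 2)
      ∧ ((Real.sqrt (1 + (1 - n ^ 2) * t ^ 2) + n * t ^ 2) / (1 + t ^ 2) = 1 / n
          ↔ t = 1 / Real.sqrt (n ^ 2 - 1)) := by
    intro t ht
    obtain ⟨ht0, ht1⟩ := ht
    have htsq : t ^ 2 ≤ 1 / (n ^ 2 - 1) := by
      have h1 : t ^ 2 ≤ (1 / Real.sqrt (n ^ 2 - 1)) ^ 2 := by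
        exact pow_le_pow_left₀ ht0 ht1 2
      rwa [div_pow, one_pow, Real.sq_sqrt hn2.le] at h1
    have h1 : t ^ 2 * (n ^ 2 - 1) ≤ 1 := (le_div_iff₀ hn2).mp htsq
    set u := 1 + (1 - n ^ 2) * t ^ 2 with hu
    have hu0 : (0:ℝ) ≤ u := by rw [hu]; nlinarith
    have hu1 : u ≤ 1 := by rw [hu]; nlinarith [sq_nonneg t]
    have hsu : Real.sqrt u * Real.sqrt u = u := Real.mul_self_sqrt hu0
    have hsu1 : Real.sqrt u ≤ 1 := Real.sqrt_le_one.mpr hu1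
    have hsun : Real.sqrt u ≤ n := hsu1.trans hn.le
    have hsnn : 0 ≤ Real.sqrt u := Real.sqrt_nonneg u
    have hden : (0:ℝ) < 1 + t ^ 2 := by positivity
    have hineq : 1 / n ≤ (Real.sqrt u + n * t ^ 2) / (1 + t ^ 2) := by
      rw [div_le_div_iff₀ hn0 hden]
      nlinarith [mul_nonneg hsnn (sub_nonneg.mpr hsun)]
    refine ⟨hineq, ?_, ?_⟩
    · intro heq
      rw [div_eq_div_iff hden.ne' hn0.ne'] at heq
      have husqz : Real.sqrt u = 0 := by
        nlinarith [mul_nonneg hsnn (sub_nonneg.mpr hsun)]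
      have huz : u = 0 := by rw [← hsu, husqz, mul_zero]
      have ht2 : t ^ 2 = 1 / (n ^ 2 - 1) := by
        rw [hu] at huz; field_simp; nlinarith
      have : t = Real.sqrt (t ^ 2) := (Real.sqrt_sq ht0).symm
      rw [this, ht2, one_div, Real.sqrt_inv, ← one_div]
    · intro htv
      have ht2 : t ^ 2 = 1 / (n ^ 2 - 1) := by
        rw [htv, div_pow, one_pow, Real.sq_sqrt hn2.le]
      have huz : u = 0 := by rw [hu, ht2]; field_simp; ring
      rw [huz, Real.sqrt_zero, ht2]
      field_simp
      ring
  refine ⟨key, ?_⟩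
  intro x p y hx hpx hp hy
  have hxx : ⟪x, x⟫ = (1:ℝ) := by
    rw [real_inner_self_eq_norm_sq, hx]; norm_num
  have hxp : ⟪x, p⟫ = (0:ℝ) := by rw [real_inner_comm]; exact hpx
  have hyv : ⟪x, y⟫ = (Real.sqrt (1 + (1 - n ^ 2) * ‖p‖ ^ 2) + n * ‖p‖ ^ 2) / (1 + ‖p‖ ^ 2) := by
    rw [hy, inner_add_right, real_inner_smul_right, real_inner_smul_right, hxx, hxp]
    ring
  rw [hyv]
  exact (key ‖p‖ ⟨norm_nonneg p, hp⟩).1
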